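/- Let 𝓗 be an r-partite r-uniform hypergraph with parts A_1, …, A_r. If 𝓗 is a reflection hypergraph and k, p are positive integers with 1 ≤ k ≤ r, then the blow-up 𝓗^p_{Ā_k} is also a reflection hypergraph. -/

import Mathlib

/-- Coxeter matrix of the dihedral group of order `2p`, `p ≥ 2`. -/
def dihMatrix (p : ℕ) (hp : 2 ≤ p) : CoxeterMatrix Bool where
  M := Matrix.of fun a b => if a = b then 1 else p
  isSymm := by
    ext a b
    by_cases h : a = b <;> simp [Matrix.transpose, h, eq_comm]
  diagonal := fun i => if_pos rfl
  off_diagonal := fun i j h => by simp only [Matrix.of_apply, if_neg h]; omega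

namespace DihCS

variable {p : ℕ} (hp : 2 ≤ p)

noncomputable def a : (dihMatrix p hp).Group := (dihMatrix p hp).simple false
noncomputable def b : (dihMatrix p hp).Group := (dihMatrix p hp).simple true
noncomputable def x : (dihMatrix p hp).Group := a hp * b hp

lemma ha2 : a hp * a hp = 1 := by
  simpa [a, CoxeterMatrix.toCoxeterSystem_simple] using (dihMatrix p hp).toCoxeterSystem.simple_mul_simple_self false

lemma hb2 : b hp * b hp = 1 := by
  simpa [b, CoxeterMatrix.toCoxeterSystem_simple] using (dihMatrix p hp).toCoxeterSystem.simple_mul_simple_self true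

lemma hxp : x hp ^ p = 1 := by
  have := (dihMatrix p hp).toCoxeterSystem.simple_mul_simple_pow false true
  simp only [CoxeterMatrix.toCoxeterSystem_simple] at this
  simpa [dihMatrix, x, a, b] using this

lemma ha_inv : (a hp)⁻¹ = a hp := by
  simpa [a] using (dihMatrix p hp).toCoxeterSystem.inv_simple false

lemma hx_inv : (x hp)⁻¹ = b hp * a hp := by
  have hbinv : (b hp)⁻¹ = b hp := by
    simpa [b] using (dihMatrix p hp).toCoxeterSystem.inv_simple true
  rw [x, mul_inv_rev, ha_inv, hbinv]

lemma axa : a hp * x hp * a hp = (x hp)⁻¹ := by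
  rw [hx_inv, x, ← mul_assoc, ha2, one_mul]

/-- the modular power map -/
noncomputable def chi (i : ZMod p) : (dihMatrix p hp).Group := x hp ^ i.val

lemma chi_add (i j : ZMod p) : chi hp (i + j) = chi hp i * chi hp j := by
  haveI : NeZero p := ⟨by omega⟩
  rw [chi, chi, chi, ZMod.val_add, ← pow_eq_pow_mod _ (hxp hp), pow_add]

lemma chi_zero : chi hp 0 = 1 := by
  haveI : NeZero p := ⟨by omega⟩
  rw [chi, ZMod.val_zero, pow_zero]

lemma chi_neg (i : ZMod p) : chi hp (-i) = (chi hp i)⁻¹ := by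
  have h := chi_add hp (-i) i
  rw [neg_add_cancel, chi_zero] at h
  exact eq_inv_of_mul_eq_one_left h.symm

lemma a_chi (i : ZMod p) : a hp * chi hp i = chi hp (-i) * a hp := by
  have key : ∀ m : ℕ, a hp * x hp ^ m * a hp = (x hp ^ m)⁻¹ := by
    intro m
    have : a hp * x hp ^ m * (a hp)⁻¹ = (a hp * x hp * (a hp)⁻¹) ^ m := by
      rw [conj_pow]
    rw [ha_inv] at this
    rw [this, axa, inv_pow]
  have := key i.val
  rw [chi_neg]
  calc a hp * chi hp i = (a hp * x hp ^ i.val * a hp) * a hp := by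
        rw [mul_assoc _ (a hp) (a hp), ha2, mul_one, chi]
    _ = (chi hp i)⁻¹ * a hp := by rw [this, chi]

/-- The homomorphism from the dihedral group to the Coxeter group. -/
noncomputable def psi : DihedralGroup p →* (dihMatrix p hp).Group :=
  MonoidHom.mk' (fun g => match g with
    | DihedralGroup.r i => chi hp i
    | DihedralGroup.sr i => a hp * chi hp i)
    (by
      rintro (i | i) (j | j)
      · show chi hp (i + j) = chi hp i * chi hp j
        exact chi_add hp i j
      · show a hp * chi hp (j - i) = chi hp i * (a hp * chi hp j)
        rw [a_chi, a_chi, ← mul_assoc, ← chi_add]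
        congr 2
        ring
      · show a hp * chi hp (i + j) = a hp * chi hp i * chi hp j
        rw [mul_assoc, chi_add]
      · show chi hp (j - i) = a hp * chi hp i * (a hp * chi hp j)
        calc chi hp (j - i) = chi hp (-i) * chi hp j := by
              rw [← chi_add]; congr 1; ring
          _ = chi hp (-i) * ((a hp * a hp) * chi hp j) := by rw [ha2, one_mul]
          _ = (chi hp (-i) * a hp) * (a hp * chi hp j) := by group
          _ = a hp * chi hp i * (a hp * chi hp j) := by rw [← a_chi])

/-- generators in the dihedral group -/
def f : Bool → DihedralGroup p := fun i => if i then DihedralGroup.sr 1 else DihedralGroup.sr 0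

lemma liftable : CoxeterMatrix.IsLiftable (dihMatrix p hp) (f (p := p)) := by
  have hneg : (DihedralGroup.r (-1) : DihedralGroup p) = (DihedralGroup.r 1)⁻¹ := by
    apply eq_inv_of_mul_eq_one_left
    rw [DihedralGroup.r_mul_r, neg_add_cancel]
    rfl
  rintro (i | i) (j | j) <;>
    simp [f, dihMatrix, DihedralGroup.r_one_pow_n] <;>
    first
      | rfl
      | rw [hneg, inv_pow, DihedralGroup.r_one_pow_n, inv_one]

noncomputable def F : (dihMatrix p hp).Group →* DihedralGroup p :=
  (dihMatrix p hp).toCoxeterSystem.lift ⟨f, liftable hp⟩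

lemma F_simple (i : Bool) : F hp ((dihMatrix p hp).simple i) = f i := by
  have := CoxeterSystem.lift_apply_simple (dihMatrix p hp).toCoxeterSystem (liftable hp) i
  rwa [CoxeterMatrix.toCoxeterSystem_simple] at this

lemma F_a : F hp (a hp) = DihedralGroup.sr 0 := F_simple hp false
lemma F_b : F hp (b hp) = DihedralGroup.sr 1 := F_simple hp true

lemma F_x : F hp (x hp) = DihedralGroup.r 1 := by
  rw [x, map_mul, F_a, F_b]
  simp

lemma F_chi (i : ZMod p) : F hp (chi hp i) = DihedralGroup.r i := by
  haveI : NeZero p := ⟨by omega⟩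
  rw [chi, map_pow, F_x, DihedralGroup.r_one_pow, ZMod.natCast_rightInverse i]

lemma F_psi : (F hp).comp (psi hp) = MonoidHom.id (DihedralGroup p) := by
  haveI : NeZero p := ⟨by omega⟩
  ext g
  rcases g with i | i
  · show F hp (chi hp i) = _
    rw [F_chi]; rfl
  · show F hp (a hp * chi hp i) = _
    rw [map_mul, F_a, F_chi]
    show (DihedralGroup.sr (0 + i) : DihedralGroup p) = DihedralGroup.sr i
    rw [zero_add]

lemma psi_F : (psi hp).comp (F hp) = MonoidHom.id (dihMatrix p hp).Group := by
  refine CoxeterSystem.ext_simple (dihMatrix p hp).toCoxeterSystem ?_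
  intro i
  rw [CoxeterMatrix.toCoxeterSystem_simple]
  show psi hp (F hp ((dihMatrix p hp).simple i)) = (dihMatrix p hp).simple i
  rw [F_simple]
  haveI : NeZero p := ⟨by omega⟩
  rcases i with _ | _
  · show psi hp (DihedralGroup.sr 0) = _
    show a hp * chi hp 0 = _
    rw [chi_zero, mul_one]; rfl
  · show psi hp (DihedralGroup.sr 1) = _
    show a hp * chi hp 1 = _
    rw [chi]
    rw [ZMod.val_one_eq_one_mod]
    rw [Nat.mod_eq_of_lt (by omega), pow_one, x, ← mul_assoc, ha2, one_mul]
    rfl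

/-- The Coxeter-presentation isomorphism for the dihedral group. -/
noncomputable def dihEquiv : (dihMatrix p hp).Group ≃* DihedralGroup p :=
  MonoidHom.toMulEquiv (F hp) (psi hp) (psi_F hp) (F_psi hp)

/-- The dihedral group of order `2p` as a Coxeter system. -/
noncomputable def dihCS : CoxeterSystem (dihMatrix p hp) (DihedralGroup p) :=
  (dihMatrix p hp).toCoxeterSystem.map (dihEquiv hp)

lemma dihCS_simple (i : Bool) : (dihCS hp).simple i = f i := by
  rw [dihCS, CoxeterSystem.map_simple, CoxeterMatrix.toCoxeterSystem_simple]
  exact F_simple hp i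

end DihCS


lemma commute_of_invol {G : Type*} [Group G] {s t : G} (hs : s * s = 1) (ht : t * t = 1)
    (hst : (s * t) ^ 2 = 1) : Commute s t := by
  have h1 : (s * t) * (s * t) = 1 := by rw [← pow_two]; exact hst
  have h2 : (s * t)⁻¹ = s * t := (eq_inv_of_mul_eq_one_left h1).symm
  have hsinv : s⁻¹ = s := inv_eq_of_mul_eq_one_right hs
  have htinv : t⁻¹ = t := inv_eq_of_mul_eq_one_right ht
  show s * t = t * s
  rw [← h2, mul_inv_rev, hsinv, htinv]

section SumCS

variable {B B' : Type} (M : CoxeterMatrix B) (M' : CoxeterMatrix B')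

/-- The direct sum of two Coxeter matrices. -/
def sumMatrix : CoxeterMatrix (B ⊕ B') where
  M := Matrix.of fun i j =>
    match i, j with
    | Sum.inl i, Sum.inl j => M i j
    | Sum.inr i, Sum.inr j => M' i j
    | _, _ => 2
  isSymm := by
    ext i j
    rcases i with i | i <;> rcases j with j | j <;>
      simp [Matrix.transpose]
    · exact congrFun (congrFun M.isSymm j) i ▸ rfl
    · exact congrFun (congrFun M'.isSymm j) i ▸ rfl
  diagonal := by rintro (i | i) <;> simp [M.diagonal, M'.diagonal]
  off_diagonal := by
    rintro (i | i) (j | j) h <;> simp_all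
    · exact M.off_diagonal i j (by rintro rfl; exact h rfl)
    · exact M'.off_diagonal i j (by rintro rfl; exact h rfl)

section
variable {B B' : Type} {M : CoxeterMatrix B} {M' : CoxeterMatrix B'}
variable {W W' : Type*} [Group W] [Group W']
  (cs : CoxeterSystem M W) (cs' : CoxeterSystem M' W')

/-- The generators of the product group. -/
def fsum : B ⊕ B' → W × W' :=
  Sum.elim (fun i => (cs.simple i, 1)) (fun j => (1, cs'.simple j))

lemma fsum_liftable : CoxeterMatrix.IsLiftable (sumMatrix M M') (fsum cs cs') := by
  rintro (i | i) (j | j)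
  · show ((cs.simple i, (1 : W')) * (cs.simple j, 1)) ^ (M i j) = 1
    rw [Prod.mk_mul_mk, Prod.pow_mk, Prod.mk_eq_one]
    exact ⟨cs.simple_mul_simple_pow i j, by rw [one_mul, one_pow]⟩
  · show ((cs.simple i, (1 : W')) * (1, cs'.simple j)) ^ 2 = 1
    rw [Prod.mk_mul_mk, Prod.pow_mk, Prod.mk_eq_one, mul_one, one_mul]
    exact ⟨cs.simple_sq i, cs'.simple_sq j⟩
  · show (((1 : W), cs'.simple i) * (cs.simple j, 1)) ^ 2 = 1
    rw [Prod.mk_mul_mk, Prod.pow_mk, Prod.mk_eq_one, mul_one, one_mul]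
    exact ⟨cs.simple_sq j, cs'.simple_sq i⟩
  · show (((1 : W), cs'.simple i) * (1, cs'.simple j)) ^ (M' i j) = 1
    rw [Prod.mk_mul_mk, Prod.pow_mk, Prod.mk_eq_one]
    exact ⟨by rw [one_mul, one_pow], cs'.simple_mul_simple_pow i j⟩

/-- Map from the presented group of the sum matrix onto the product. -/
noncomputable def Fsum : (sumMatrix M M').Group →* W × W' :=
  (sumMatrix M M').toCoxeterSystem.lift ⟨fsum cs cs', fsum_liftable cs cs'⟩

lemma Fsum_simple (j : B ⊕ B') :
    Fsum cs cs' ((sumMatrix M M').simple j) = fsum cs cs' j := by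
  have := CoxeterSystem.lift_apply_simple (sumMatrix M M').toCoxeterSystem
    (fsum_liftable cs cs') j
  rwa [CoxeterMatrix.toCoxeterSystem_simple] at this

lemma inl_liftable : CoxeterMatrix.IsLiftable M
    (fun i => (sumMatrix M M').simple (Sum.inl i)) := by
  intro i j
  exact (sumMatrix M M').toCoxeterSystem.simple_mul_simple_pow (Sum.inl i) (Sum.inl j)

lemma inr_liftable : CoxeterMatrix.IsLiftable M'
    (fun i => (sumMatrix M M').simple (Sum.inr i)) := by
  intro i j
  exact (sumMatrix M M').toCoxeterSystem.simple_mul_simple_pow (Sum.inr i) (Sum.inr j)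

/-- Left inclusion. -/
noncomputable def Gl : W →* (sumMatrix M M').Group :=
  cs.lift ⟨_, inl_liftable (M := M) (M' := M')⟩

/-- Right inclusion. -/
noncomputable def Gr : W' →* (sumMatrix M M').Group :=
  cs'.lift ⟨_, inr_liftable (M := M) (M' := M')⟩

lemma Gl_simple (i : B) : Gl cs (cs.simple i) = (sumMatrix M M').simple (Sum.inl i) :=
  cs.lift_apply_simple (inl_liftable (M := M) (M' := M')) i

lemma Gr_simple (i : B') : Gr cs' (cs'.simple i) = (sumMatrix M M').simple (Sum.inr i) :=
  cs'.lift_apply_simple (inr_liftable (M := M) (M' := M')) i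

lemma commute_simples (i : B) (j : B') :
    Commute ((sumMatrix M M').simple (Sum.inl i)) ((sumMatrix M M').simple (Sum.inr j)) := by
  apply commute_of_invol
  · exact (sumMatrix M M').toCoxeterSystem.simple_mul_simple_self (Sum.inl i)
  · exact (sumMatrix M M').toCoxeterSystem.simple_mul_simple_self (Sum.inr j)
  · exact (sumMatrix M M').toCoxeterSystem.simple_mul_simple_pow (Sum.inl i) (Sum.inr j)

lemma Gl_Gr_commute : ∀ (w : W) (w' : W'),
    Commute (Gl cs w) (Gr cs' w') := by
  have key : ∀ (i : B) (w' : W'), Commute (Gl cs (cs.simple i)) (Gr cs' w') := by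
    intro i w'
    refine cs'.simple_induction (p := fun d => Commute (Gl cs (cs.simple i)) (Gr cs' d))
      w' (fun j => ?_) ?_ (fun u v hu hv => ?_)
    · beta_reduce
      rw [Gl_simple, Gr_simple]
      exact commute_simples i j
    · beta_reduce
      rw [map_one]; exact Commute.one_right _
    · beta_reduce
      rw [map_mul]; exact (hu.mul_right hv :)
  intro w w'
  refine cs.simple_induction (p := fun u => Commute (Gl cs u) (Gr cs' w'))
    w (fun i => key i w') ?_ (fun u v hu hv => ?_)
  · beta_reduce
    rw [map_one]; exact Commute.one_left _
  · beta_reduce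
    rw [map_mul]; exact (hu.mul_left hv :)

/-- The coproduct map. -/
noncomputable def Gsum : W × W' →* (sumMatrix M M').Group :=
  MonoidHom.noncommCoprod (Gl cs) (Gr cs') (Gl_Gr_commute cs cs')

lemma Gsum_Fsum : (Gsum cs cs').comp (Fsum cs cs') =
    MonoidHom.id (sumMatrix M M').Group := by
  refine CoxeterSystem.ext_simple (sumMatrix M M').toCoxeterSystem ?_
  rintro (i | i) <;>
    rw [CoxeterMatrix.toCoxeterSystem_simple, MonoidHom.comp_apply, Fsum_simple,
      MonoidHom.id_apply]
  · show Gsum cs cs' (cs.simple i, 1) = _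
    rw [Gsum, MonoidHom.noncommCoprod_apply, map_one, mul_one, Gl_simple]
  · show Gsum cs cs' (1, cs'.simple i) = _
    rw [Gsum, MonoidHom.noncommCoprod_apply, map_one, one_mul, Gr_simple]

lemma Fsum_Gsum : (Fsum cs cs').comp (Gsum cs cs') =
    MonoidHom.id (W × W') := by
  have hl : (Fsum cs cs').comp (Gl cs) = MonoidHom.inl W W' := by
    refine cs.ext_simple fun i => ?_
    rw [MonoidHom.comp_apply, Gl_simple, Fsum_simple]
    rfl
  have hr : (Fsum cs cs').comp (Gr cs') = MonoidHom.inr W W' := by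
    refine cs'.ext_simple fun i => ?_
    rw [MonoidHom.comp_apply, Gr_simple, Fsum_simple]
    rfl
  refine MonoidHom.ext fun g => ?_
  obtain ⟨w, w'⟩ := g
  rw [MonoidHom.comp_apply, MonoidHom.id_apply, Gsum, MonoidHom.noncommCoprod_apply, map_mul]
  rw [← MonoidHom.comp_apply _ (Gl cs), hl, ← MonoidHom.comp_apply _ (Gr cs'), hr]
  show ((w, 1) : W × W') * (1, w') = (w, w')
  rw [Prod.mk_mul_mk, mul_one, one_mul]

/-- The isomorphism between the presented group of the sum matrix and the product. -/
noncomputable def sumEquiv : (sumMatrix M M').Group ≃* W × W' :=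
  MonoidHom.toMulEquiv (Fsum cs cs') (Gsum cs cs')
    (Gsum_Fsum cs cs') (Fsum_Gsum cs cs')

/-- The Coxeter system on the product of two Coxeter groups. -/
noncomputable def sumCS : CoxeterSystem (sumMatrix M M') (W × W') :=
  (sumMatrix M M').toCoxeterSystem.map (sumEquiv cs cs')

lemma sumCS_simple (j : B ⊕ B') : (sumCS cs cs').simple j = fsum cs cs' j := by
  rw [sumCS, CoxeterSystem.map_simple, CoxeterMatrix.toCoxeterSystem_simple]
  exact Fsum_simple cs cs' j

end

section Prod

variable {G H : Type*} [Group G] [Group H]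

lemma closure_prodgen (s : Set G) (t : Set H) :
    Subgroup.closure ((fun g => (g, (1 : H))) '' s ∪ (fun h => ((1 : G), h)) '' t) =
      (Subgroup.closure s).prod (Subgroup.closure t) := by
  apply le_antisymm
  · rw [Subgroup.closure_le]
    rintro x (⟨g, hg, rfl⟩ | ⟨h, ht, rfl⟩)
    · exact Subgroup.mem_prod.mpr ⟨Subgroup.subset_closure hg, Subgroup.one_mem _⟩
    · exact Subgroup.mem_prod.mpr ⟨Subgroup.one_mem _, Subgroup.subset_closure ht⟩
  · rintro ⟨g, h⟩ hgh
    obtain ⟨hg, hh⟩ := Subgroup.mem_prod.mp hgh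
    have h1 : ((g, (1 : H)) : G × H) ∈
        Subgroup.closure ((fun g => (g, (1 : H))) '' s ∪ (fun h => ((1 : G), h)) '' t) := by
      have hle : (Subgroup.closure s).map (MonoidHom.inl G H) ≤
          Subgroup.closure ((fun g => (g, (1 : H))) '' s ∪ (fun h => ((1 : G), h)) '' t) := by
        rw [MonoidHom.map_closure]
        exact Subgroup.closure_mono (Set.subset_union_left)
      exact hle (Subgroup.mem_map_of_mem _ hg)
    have h2 : (((1 : G), h) : G × H) ∈
        Subgroup.closure ((fun g => (g, (1 : H))) '' s ∪ (fun h => ((1 : G), h)) '' t) := by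
      have hle : (Subgroup.closure t).map (MonoidHom.inr G H) ≤
          Subgroup.closure ((fun g => (g, (1 : H))) '' s ∪ (fun h => ((1 : G), h)) '' t) := by
        rw [MonoidHom.map_closure]
        exact Subgroup.closure_mono (Set.subset_union_right)
      exact hle (Subgroup.mem_map_of_mem _ hh)
    have : ((g, h) : G × H) = (g, 1) * (1, h) := by
      rw [Prod.mk_mul_mk, mul_one, one_mul]
    rw [this]
    exact mul_mem h1 h2

/-- quotient of a product by a product subgroup -/
def quotProdEquiv (K : Subgroup G) (L : Subgroup H) :
    (G × H) ⧸ K.prod L ≃ (G ⧸ K) × (H ⧸ L) where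
  toFun := fun q => Quotient.liftOn' q (fun gh => ((gh.1 : G ⧸ K), (gh.2 : H ⧸ L))) (by
    rintro ⟨a₁, a₂⟩ ⟨b₁, b₂⟩ hab
    rw [QuotientGroup.leftRel_apply] at hab
    obtain ⟨h1, h2⟩ := Subgroup.mem_prod.mp hab
    exact Prod.ext (QuotientGroup.eq.mpr h1) (QuotientGroup.eq.mpr h2))
  invFun q := Quotient.liftOn₂' q.1 q.2 (fun g h => (QuotientGroup.mk (g, h)))
    (by
      intro g₁ h₁ g₂ h₂ hg hh
      rw [QuotientGroup.leftRel_apply] at hg hh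
      apply Quotient.sound'
      rw [QuotientGroup.leftRel_apply]
      exact Subgroup.mem_prod.mpr ⟨hg, hh⟩)
  left_inv := by
    intro q
    induction q using Quotient.inductionOn' with
    | h gh => rfl
  right_inv := by
    rintro ⟨q1, q2⟩
    induction q1 using Quotient.inductionOn' with
    | h g =>
      induction q2 using Quotient.inductionOn' with
      | h h => rfl

lemma quotProdEquiv_mk (K : Subgroup G) (L : Subgroup H) (g : G) (h : H) :
    quotProdEquiv K L (QuotientGroup.mk (g, h)) = (QuotientGroup.mk g, QuotientGroup.mk h) :=
  rfl

end Prod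

lemma card_dih_quot (p : ℕ) [NeZero p] :
    Nat.card (DihedralGroup p ⧸ Subgroup.closure {DihedralGroup.sr 0}) = p := by
  have h1 : Nat.card (DihedralGroup p) = 2 * p := by
    rw [Nat.card_eq_fintype_card, DihedralGroup.card]
  have h2 : Nat.card (Subgroup.closure {(DihedralGroup.sr 0 : DihedralGroup p)}) = 2 := by
    rw [← Subgroup.zpowers_eq_closure, Nat.card_zpowers, DihedralGroup.orderOf_sr]
  have h3 := Subgroup.card_eq_card_quotient_mul_card_subgroup
    (Subgroup.closure {(DihedralGroup.sr 0 : DihedralGroup p)})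
  rw [h1, h2] at h3
  omega

/-- Equivalence between `Fin p` and cosets of the reflection subgroup in the dihedral group. -/
noncomputable def dih_quot_equiv (p : ℕ) [NeZero p] :
    Fin p ≃ DihedralGroup p ⧸ Subgroup.closure {DihedralGroup.sr 0} := by
  letI := Fintype.ofFinite (DihedralGroup p ⧸ Subgroup.closure {DihedralGroup.sr 0})
  exact (Fintype.equivFinOfCardEq (by rw [← Nat.card_eq_fintype_card, card_dih_quot])).symm


/-- A presentation of an `r`-partite `r`-uniform hypergraph (with parts `A i` and edge
set `E ⊆ Π i, A i`) as a reflection hypergraph: a finite Coxeter system `(W, S)`,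
subsets `T i` of the simple reflections, part-respecting bijections between `A i` and
the left cosets of the subgroup generated by `T i`, under which the edges are exactly
the tuples `(w·W_1, …, w·W_r)` for `w ∈ W`. -/
structure ReflectionPresentation {r : ℕ} (A : Fin r → Type*) (E : Set (∀ i, A i)) where
  B : Type
  M : CoxeterMatrix B
  W : Type
  [instGroup : Group W]
  instFinite : Finite W
  cs : CoxeterSystem M W
  T : Fin r → Set B
  equiv : ∀ i, A i ≃ W ⧸ Subgroup.closure (cs.simple '' T i)
  edge_iff : ∀ e : ∀ i, A i,
    e ∈ E ↔ ∃ w : W, ∀ i, equiv i (e i) = QuotientGroup.mk w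

/-- An `r`-partite `r`-uniform hypergraph is a reflection hypergraph if it is
isomorphic, respecting parts, to a `(T_1, …, T_r; S, W)`-reflection hypergraph for some
finite Coxeter system `(W, S)` and subsets `T_1, …, T_r ⊆ S`. -/
def IsReflectionHypergraph {r : ℕ} (A : Fin r → Type*) (E : Set (∀ i, A i)) : Prop :=
  Nonempty (ReflectionPresentation A E)

/-- if an `r`-partite `r`-uniform hypergraph with parts `A_1, …, A_r` is
a reflection hypergraph and `1 ≤ k ≤ r`, `p ≥ 1`, then the blow-up `𝓗^p_{Ā_k}` (each
vertex of `A_k` replaced by `p` copies, and each edge through `v ∈ A_k` replicated for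
each copy of `v`) is also a reflection hypergraph. -/
theorem isReflectionHypergraph_blowUp {r : ℕ} (A : Fin r → Type*)
    (E : Set (∀ i, A i)) (k : Fin r) (p : ℕ) (hp : 0 < p)
    (h : IsReflectionHypergraph A E) :
    IsReflectionHypergraph (fun i => A i × Fin (if i = k then p else 1))
      {e' | (fun i => (e' i).1) ∈ E} := by
  obtain ⟨pres⟩ := h
  obtain ⟨B, M, W, instF, cs, T, eqv, hedge⟩ := pres
  haveI := instF
  by_cases hp2 : 2 ≤ p
  · -- main case : use the product with a dihedral group of order 2p
    haveI : NeZero p := ⟨by omega⟩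
    set csd := DihCS.dihCS hp2 with hcsd
    set Td : Fin r → Set Bool := fun i => if i = k then {false} else Set.univ with hTd
    set T'' : Fin r → Set (B ⊕ Bool) := fun i => Sum.inl '' T i ∪ Sum.inr '' Td i with hT''
    set cs'' := sumCS cs csd with hcs''
    set K : Fin r → Subgroup W := fun i => Subgroup.closure (cs.simple '' T i) with hK
    set L : Fin r → Subgroup (DihedralGroup p) :=
      fun i => Subgroup.closure (csd.simple '' Td i) with hL
    have hclos : ∀ i, Subgroup.closure (cs''.simple '' T'' i) = (K i).prod (L i) := by
      intro i
      have himg : cs''.simple '' T'' i =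
          (fun g => (g, (1 : DihedralGroup p))) '' (cs.simple '' T i) ∪
            (fun h => ((1 : W), h)) '' (csd.simple '' Td i) := by
        rw [hT'']
        simp only [Set.image_union, ← Set.image_comp]
        congr 1
        · apply congrFun
          apply congrArg
          funext x
          show cs''.simple (Sum.inl x) = (cs.simple x, 1)
          rw [hcs'', sumCS_simple]
          rfl
        · apply congrFun
          apply congrArg
          funext x
          show cs''.simple (Sum.inr x) = (1, csd.simple x)
          rw [hcs'', sumCS_simple]
          rfl
      rw [himg, closure_prodgen]
    have hLtop : ∀ i, i ≠ k → L i = ⊤ := by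
      intro i hik
      show Subgroup.closure (csd.simple '' (if i = k then {false} else Set.univ)) = ⊤
      rw [if_neg hik, Set.image_univ]
      exact csd.subgroup_closure_range_simple
    have hLk : L k = Subgroup.closure {DihedralGroup.sr 0} := by
      show Subgroup.closure (csd.simple '' (if k = k then {false} else Set.univ)) = _
      rw [if_pos rfl, Set.image_singleton, hcsd, DihCS.dihCS_simple]
      rfl
    have zeta : ∀ i, Fin (if i = k then p else 1) ≃ (DihedralGroup p) ⧸ L i := by
      intro i
      by_cases h : i = k
      · refine (finCongr ?_).trans
          ((dih_quot_equiv p).trans (Subgroup.quotientEquivOfEq ?_))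
        · rw [if_pos h]
        · rw [h, hLk]
      · haveI : Subsingleton ((DihedralGroup p) ⧸ L i) := by
          rw [hLtop i h]
          exact QuotientGroup.subsingleton_quotient_top
        haveI : Subsingleton (Fin (if i = k then p else 1)) := by
          rw [if_neg h]
          infer_instance
        exact equivOfSubsingletonOfSubsingleton
          (fun _ => QuotientGroup.mk 1) (fun _ => ⟨0, by rw [if_neg h]; omega⟩)
    set eqv'' : ∀ i, (A i × Fin (if i = k then p else 1)) ≃
        (W × DihedralGroup p) ⧸ Subgroup.closure (cs''.simple '' T'' i) := fun i =>
      ((eqv i).prodCongr (zeta i)).trans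
        ((Subgroup.quotientEquivOfEq (hclos i)).trans (quotProdEquiv (K i) (L i))).symm
      with heqv''
    have hkey : ∀ (i : Fin r) (x : A i × Fin (if i = k then p else 1)) (w : W)
        (d : DihedralGroup p), eqv'' i x = QuotientGroup.mk (w, d) ↔
          (eqv i x.1 = QuotientGroup.mk w ∧ zeta i x.2 = QuotientGroup.mk d) := by
      intro i x w d
      rw [heqv'']
      rw [Equiv.trans_apply, Equiv.symm_apply_eq, Equiv.trans_apply,
        Subgroup.quotientEquivOfEq_mk, quotProdEquiv_mk, Equiv.prodCongr_apply,
        Prod.map_apply, Prod.ext_iff]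
    refine ⟨⟨B ⊕ Bool, sumMatrix M (dihMatrix p hp2), W × DihedralGroup p, inferInstance,
      cs'', T'', eqv'', fun e' => ?_⟩⟩
    show (fun i => (e' i).1) ∈ E ↔ _
    rw [hedge]
    constructor
    · rintro ⟨w, hw⟩
      obtain ⟨d, hd⟩ := QuotientGroup.mk_surjective (zeta k (e' k).2)
      refine ⟨(w, d), fun i => ?_⟩
      rw [hkey]
      refine ⟨hw i, ?_⟩
      by_cases hik : i = k
      · subst hik
        exact hd.symm
      · haveI : Subsingleton ((DihedralGroup p) ⧸ L i) := by
          rw [hLtop i hik]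
          exact QuotientGroup.subsingleton_quotient_top
        exact Subsingleton.elim _ _
    · rintro ⟨⟨w, d⟩, hwd⟩
      exact ⟨w, fun i => ((hkey i (e' i) w d).mp (hwd i)).1⟩
  · -- p = 1 : the blow-up is isomorphic to the original hypergraph
    have hp1 : p = 1 := by omega
    subst hp1
    have hone : ∀ i : Fin r, (if i = k then 1 else 1) = 1 := fun i => ite_self _
    set eqv' : ∀ i, (A i × Fin (if i = k then 1 else 1)) ≃
        W ⧸ Subgroup.closure (cs.simple '' T i) := fun i =>
      ((Equiv.refl (A i)).prodCongr (finCongr (hone i))).trans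
        ((Equiv.prodUnique (A i) (Fin 1)).trans (eqv i)) with heqv'
    refine ⟨⟨B, M, W, instF, cs, T, eqv', fun e' => ?_⟩⟩
    show (fun i => (e' i).1) ∈ E ↔ _
    rw [hedge]
    refine exists_congr fun w => forall_congr' fun i => ?_
    have : eqv' i (e' i) = eqv i ((e' i).1) := rfl
    rw [this]
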